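/- Let h, g : ℝ^d → ℝ ∪ {∞} be proper closed convex functions differentiable on the interiors of their domains, Q ⊆ int(dom g) ∩ int(dom h) an open convex set, z ∈ Q, and L ≥ 0. If h and g are C² on Q \ {z}, then the function L·g − h (extended by ∞ outside Q) is convex on Q if and only if ∇²h(x) ⪯ L·∇²g(x) for all x ∈ Q \ {z}. -/

import Mathlib

open Filter Topology RealInnerProductSpace Classical

noncomputable section

abbrev E (d : ℕ) := EuclideanSpace ℝ (Fin d)

def IsProperClosedConvexOn {d : ℕ} (f : E d → ℝ) (S : Set (E d)) : Prop :=
  S.Nonempty ∧ ConvexOn ℝ S f ∧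
  IsClosed {p : E d × ℝ | p.1 ∈ S ∧ f p.1 ≤ p.2}

/-- second-order characterization of relative smoothness.  `h, g` are proper
closed convex, differentiable (with gradients `h', g'`) on the interiors of their domains,
and `C²` on `Q \ {z}` with Hessians `h'', g''`.  Then `L·g - h` is convex on the open convex
set `Q` iff `∇²h(x) ⪯ L·∇²g(x)` (in the Loewner order, i.e. as quadratic forms) for all
`x ∈ Q \ {z}`. -/
lemma comb_aux {d : ℕ} (x v : E d) {a b : ℝ} (t1 t2 : ℝ) (hab : a + b = 1) :
    x + (a * t1 + b * t2) • v = a • (x + t1 • v) + b • (x + t2 • v) := by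
  have h1 : (a * t1 + b * t2) • v = a • (t1 • v) + b • (t2 • v) := by
    rw [add_smul, mul_smul, mul_smul]
  have h2 : x = a • x + b • x := by rw [← add_smul, hab, one_smul]
  rw [h1]; nth_rewrite 1 [h2]; simp only [smul_add]; abel

lemma comb_aux2 {d : ℕ} (x y : E d) {a b : ℝ} (hab : a + b = 1) :
    x + b • (y - x) = a • x + b • y := by
  have : a = 1 - b := by linarith
  subst this
  rw [smul_sub, sub_smul, one_smul]
  abel

/-- If `φ` is differentiable with derivative `ψ` on an open convex `I ⊆ ℝ` and `ψ` has a
nonnegative derivative everywhere on `I` except possibly at one point `t0`, then `ψ` is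
monotone on `I`. -/
lemma monotoneOn_glue {I : Set ℝ} (hIo : IsOpen I) (hIc : Convex ℝ I)
    {φ ψ : ℝ → ℝ} (hφ : ∀ t ∈ I, HasDerivAt φ (ψ t) t) (t0 : ℝ)
    (hψ : ∀ t ∈ I, t ≠ t0 → ∃ χ, 0 ≤ χ ∧ HasDerivAt ψ χ t) :
    MonotoneOn ψ I := by
  have key : ∀ J : Set ℝ, IsOpen J → Convex ℝ J → J ⊆ I → t0 ∉ J → MonotoneOn ψ J := by
    intro J hJo hJc hJI hJt0
    refine monotoneOn_of_deriv_nonneg hJc ?_ ?_ ?_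
    · intro t ht
      obtain ⟨χ, _, hd⟩ := hψ t (hJI ht) (by rintro rfl; exact hJt0 ht)
      exact hd.continuousAt.continuousWithinAt
    · rw [hJo.interior_eq]
      intro t ht
      obtain ⟨χ, _, hd⟩ := hψ t (hJI ht) (by rintro rfl; exact hJt0 ht)
      exact hd.differentiableAt.differentiableWithinAt
    · rw [hJo.interior_eq]
      intro t ht
      obtain ⟨χ, hχ, hd⟩ := hψ t (hJI ht) (by rintro rfl; exact hJt0 ht)
      rw [hd.deriv]; exact hχ
  have monoL : MonotoneOn ψ (I ∩ Set.Iio t0) :=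
    key _ (hIo.inter isOpen_Iio) (hIc.inter (convex_Iio t0)) Set.inter_subset_left
      (fun hmem => lt_irrefl t0 hmem.2)
  have monoR : MonotoneOn ψ (I ∩ Set.Ioi t0) :=
    key _ (hIo.inter isOpen_Ioi) (hIc.inter (convex_Ioi t0)) Set.inter_subset_left
      (fun hmem => lt_irrefl t0 hmem.2)
  have crossL : ∀ s ∈ I, s < t0 → t0 ∈ I → ψ s ≤ ψ t0 := by
    intro s hs hst0 ht0
    have hIcc : Set.Icc s t0 ⊆ I := hIc.ordConnected.out hs ht0
    have htend : Tendsto (slope φ t0) (𝓝[<] t0) (𝓝 (ψ t0)) :=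
      (hasDerivAt_iff_tendsto_slope.mp (hφ t0 ht0)).mono_left
        (nhdsWithin_mono _ fun u hu => ne_of_lt hu)
    refine ge_of_tendsto htend ?_
    filter_upwards [Ioo_mem_nhdsLT_of_mem (⟨hst0, le_refl t0⟩ : t0 ∈ Set.Ioc s t0)] with u hu
    obtain ⟨c, hc, hceq⟩ := exists_hasDerivAt_eq_slope φ ψ hu.2
      (fun r hr => ((hφ r (hIcc ⟨hu.1.le.trans hr.1, hr.2⟩)).continuousAt).continuousWithinAt)
      (fun r hr => hφ r (hIcc ⟨(hu.1.trans hr.1).le, hr.2.le⟩))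
    have hslope : slope φ t0 u = ψ c := by
      rw [slope_comm, slope_def_field, hceq]
    rw [hslope]
    exact monoL ⟨hs, hst0⟩ ⟨hIcc ⟨(hu.1.trans hc.1).le, hc.2.le⟩, hc.2⟩ (hu.1.trans hc.1).le
  have crossR : ∀ t ∈ I, t0 < t → t0 ∈ I → ψ t0 ≤ ψ t := by
    intro t ht ht0t ht0
    have hIcc : Set.Icc t0 t ⊆ I := hIc.ordConnected.out ht0 ht
    have htend : Tendsto (slope φ t0) (𝓝[>] t0) (𝓝 (ψ t0)) :=
      (hasDerivAt_iff_tendsto_slope.mp (hφ t0 ht0)).mono_left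
        (nhdsWithin_mono _ fun u hu => ne_of_gt hu)
    refine le_of_tendsto htend ?_
    filter_upwards [Ioo_mem_nhdsGT_of_mem (⟨le_refl t0, ht0t⟩ : t0 ∈ Set.Ico t0 t)] with u hu
    obtain ⟨c, hc, hceq⟩ := exists_hasDerivAt_eq_slope φ ψ hu.1
      (fun r hr => ((hφ r (hIcc ⟨hr.1, hr.2.trans hu.2.le⟩)).continuousAt).continuousWithinAt)
      (fun r hr => hφ r (hIcc ⟨hr.1.le, (hr.2.trans hu.2).le⟩))
    have hslope : slope φ t0 u = ψ c := by
      rw [slope_def_field, hceq]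
    rw [hslope]
    exact monoR ⟨hIcc ⟨hc.1.le, (hc.2.trans hu.2).le⟩, hc.1⟩ ⟨ht, ht0t⟩ (hc.2.trans hu.2).le
  intro s hs t ht hst
  rcases eq_or_lt_of_le hst with rfl | hst
  · exact le_refl _
  rcases lt_trichotomy t t0 with h1 | h1 | h1
  · exact monoL ⟨hs, hst.trans h1⟩ ⟨ht, h1⟩ hst.le
  · subst h1; exact crossL s hs hst ht
  · rcases lt_trichotomy s t0 with h2 | h2 | h2
    · have ht0 : t0 ∈ I := hIc.ordConnected.out hs ht ⟨h2.le, h1.le⟩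
      exact (crossL s hs h2 ht0).trans (crossR t ht h1 ht0)
    · subst h2; exact crossR t ht h1 hs
    · exact monoR ⟨hs, h2⟩ ⟨ht, h2.trans hst⟩ hst.le

theorem stmt5 {d : ℕ} (h g : E d → ℝ) (Sh Sg : Set (E d))
    (hpc : IsProperClosedConvexOn h Sh) (gpc : IsProperClosedConvexOn g Sg)
    (h' g' : E d → E d)
    (hdiff : ∀ x ∈ interior Sh, HasGradientAt h (h' x) x)
    (gdiff : ∀ x ∈ interior Sg, HasGradientAt g (g' x) x)
    (Q : Set (E d)) (hQo : IsOpen Q) (hQc : Convex ℝ Q)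
    (hQsub : Q ⊆ interior Sg ∩ interior Sh)
    (z : E d) (hz : z ∈ Q) (L : ℝ) (hL : 0 ≤ L)
    (h'' g'' : E d → (E d →L[ℝ] E d))
    (hC2h : (∀ x ∈ Q \ {z}, HasFDerivAt h' (h'' x) x) ∧ ContinuousOn h'' (Q \ {z}))
    (hC2g : (∀ x ∈ Q \ {z}, HasFDerivAt g' (g'' x) x) ∧ ContinuousOn g'' (Q \ {z})) :
    ConvexOn ℝ Q (fun x => L * g x - h x) ↔
      ∀ x ∈ Q \ {z}, ∀ v : E d, ⟪v, h'' x v⟫ ≤ L * ⟪v, g'' x v⟫ := by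

  -- derivative of the affine line
  have hcd : ∀ (p v : E d) (t : ℝ), HasDerivAt (fun s : ℝ => p + s • v) v t := by
    intro p v t
    simpa using ((hasDerivAt_id t).smul_const v).const_add p
  -- first derivative of the objective along a line
  have hφd : ∀ (p v : E d) (t : ℝ), p + t • v ∈ Q →
      HasDerivAt (fun s => L * g (p + s • v) - h (p + s • v))
        (L * ⟪g' (p + t • v), v⟫ - ⟪h' (p + t • v), v⟫) t := by
    intro p v t htQ
    have hg1 : HasDerivAt (fun s => g (p + s • v)) (⟪g' (p + t • v), v⟫) t := by
      have := (hasGradientAt_iff_hasFDerivAt.mp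
        (gdiff _ (hQsub htQ).1)).comp_hasDerivAt t (hcd p v t)
      simpa [InnerProductSpace.toDual_apply_apply, Function.comp_def] using this
    have hh1 : HasDerivAt (fun s => h (p + s • v)) (⟪h' (p + t • v), v⟫) t := by
      have := (hasGradientAt_iff_hasFDerivAt.mp
        (hdiff _ (hQsub htQ).2)).comp_hasDerivAt t (hcd p v t)
      simpa [InnerProductSpace.toDual_apply_apply, Function.comp_def] using this
    exact (hg1.const_mul L).sub hh1
  -- second derivative along a line, away from `z`
  have hψd : ∀ (p v : E d) (t : ℝ), p + t • v ∈ Q \ {z} →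
      HasDerivAt (fun s => L * ⟪g' (p + s • v), v⟫ - ⟪h' (p + s • v), v⟫)
        (L * ⟪g'' (p + t • v) v, v⟫ - ⟪h'' (p + t • v) v, v⟫) t := by
    intro p v t ht
    have hg2 : HasDerivAt (fun s => g' (p + s • v)) (g'' (p + t • v) v) t :=
      (hC2g.1 _ ht).comp_hasDerivAt t (hcd p v t)
    have hh2 : HasDerivAt (fun s => h' (p + s • v)) (h'' (p + t • v) v) t :=
      (hC2h.1 _ ht).comp_hasDerivAt t (hcd p v t)
    have hg3 : HasDerivAt (fun s => ⟪g' (p + s • v), v⟫) (⟪g'' (p + t • v) v, v⟫) t := by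
      simpa using hg2.inner ℝ (hasDerivAt_const t v)
    have hh3 : HasDerivAt (fun s => ⟪h' (p + s • v), v⟫) (⟪h'' (p + t • v) v, v⟫) t := by
      simpa using hh2.inner ℝ (hasDerivAt_const t v)
    exact (hg3.const_mul L).sub hh3
  constructor
  · -- convexity implies the Hessian inequality
    rintro hconv p ⟨hpQ, hpz⟩ v
    have hpz' : p ≠ z := hpz
    have hopen : IsOpen (Q \ {z}) := hQo.sdiff isClosed_singleton
    have hccont : Continuous (fun t : ℝ => p + t • v) :=
      continuous_const.add (continuous_id.smul continuous_const)
    have hpre : IsOpen ((fun t : ℝ => p + t • v) ⁻¹' (Q \ {z})) := hopen.preimage hccont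
    have h0mem : (0 : ℝ) ∈ (fun t : ℝ => p + t • v) ⁻¹' (Q \ {z}) := by
      simp only [Set.mem_preimage, zero_smul, add_zero]
      exact ⟨hpQ, hpz⟩
    obtain ⟨ε, hε, hball⟩ := Metric.isOpen_iff.mp hpre 0 h0mem
    have hIoo : Set.Ioo (-ε) ε ⊆ (fun t : ℝ => p + t • v) ⁻¹' (Q \ {z}) := by
      intro t ht
      apply hball
      rw [Real.ball_eq_Ioo]
      simpa using ht
    have hIQ : ∀ t ∈ Set.Ioo (-ε) ε, p + t • v ∈ Q := fun t ht => (hIoo ht).1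
    have h0I : (0 : ℝ) ∈ Set.Ioo (-ε) ε := ⟨neg_lt_zero.mpr hε, hε⟩
    have hφconv : ConvexOn ℝ (Set.Ioo (-ε) ε)
        (fun s : ℝ => L * g (p + s • v) - h (p + s • v)) := by
      refine ⟨convex_Ioo _ _, ?_⟩
      intro t1 ht1 t2 ht2 a b ha hb hab
      have hmem := hconv.2 (hIQ t1 ht1) (hIQ t2 ht2) ha hb hab
      simp only [smul_eq_mul] at *
      rw [comb_aux p v t1 t2 hab]
      exact hmem
    have hmono : MonotoneOn
        (fun t : ℝ => L * ⟪g' (p + t • v), v⟫ - ⟪h' (p + t • v), v⟫) (Set.Ioo (-ε) ε) := by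
      intro s hs t ht hst
      rcases eq_or_lt_of_le hst with rfl | hst
      · exact le_refl _
      exact (hφconv.le_slope_of_hasDerivAt hs ht hst (hφd p v s (hIQ s hs))).trans
        (hφconv.slope_le_of_hasDerivAt hs ht hst (hφd p v t (hIQ t ht)))
    have hd0 : HasDerivAt (fun t : ℝ => L * ⟪g' (p + t • v), v⟫ - ⟪h' (p + t • v), v⟫)
        (L * ⟪g'' p v, v⟫ - ⟪h'' p v, v⟫) 0 := by
      have := hψd p v 0 (by simpa using Set.mem_diff_singleton.mpr ⟨hpQ, hpz'⟩)
      simpa using this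
    have hkey : 0 ≤ L * ⟪g'' p v, v⟫ - ⟪h'' p v, v⟫ := by
      have htend := (hasDerivAt_iff_tendsto_slope.mp hd0).mono_left
        (nhdsWithin_mono (0 : ℝ) fun u (hu : u ∈ Set.Ioi (0:ℝ)) => ne_of_gt hu)
      refine ge_of_tendsto htend ?_
      filter_upwards [Ioo_mem_nhdsGT_of_mem (⟨le_refl (0:ℝ), hε⟩ : (0:ℝ) ∈ Set.Ico 0 ε)]
        with u hu
      rw [slope_def_field]
      apply div_nonneg _ (by linarith [hu.1])
      have := hmono h0I ⟨by linarith [hu.1], hu.2⟩ hu.1.le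
      dsimp only at this
      linarith
    have e1 : ⟪v, h'' p v⟫ = ⟪h'' p v, v⟫ := real_inner_comm _ _
    have e2 : ⟪v, g'' p v⟫ = ⟪g'' p v, v⟫ := real_inner_comm _ _
    rw [e1, e2]; linarith
  · -- Hessian inequality implies convexity
    intro hess
    refine ⟨hQc, ?_⟩
    intro x hx y hy a b ha hb hab
    by_cases hxy : y = x
    · subst hxy
      rw [Convex.combo_self hab _]
      simp only [smul_eq_mul]
      have hring : a * (L * g y - h y) + b * (L * g y - h y) = (a + b) * (L * g y - h y) := by
        ring
      rw [hring, hab, one_mul]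
    · set v : E d := y - x with hv
      have hvne : v ≠ 0 := sub_ne_zero.mpr hxy
      set I : Set ℝ := (fun t : ℝ => x + t • v) ⁻¹' Q with hIdef
      have hccont : Continuous (fun t : ℝ => x + t • v) :=
        continuous_const.add (continuous_id.smul continuous_const)
      have hIo : IsOpen I := hQo.preimage hccont
      have hIc : Convex ℝ I := by
        intro t1 ht1 t2 ht2 a' b' ha' hb' hab'
        show x + (a' • t1 + b' • t2) • v ∈ Q
        simp only [smul_eq_mul]
        rw [comb_aux x v t1 t2 hab']
        exact hQc ht1 ht2 ha' hb' hab'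
      set t0 : ℝ := if hex : ∃ t : ℝ, x + t • v = z then Classical.choose hex else 0 with ht0def
      have hne : ∀ t ∈ I, t ≠ t0 → x + t • v ∈ Q \ {z} := by
        intro t ht htne
        refine ⟨ht, ?_⟩
        intro hctz
        have hctz' : x + t • v = z := hctz
        have hex : ∃ s : ℝ, x + s • v = z := ⟨t, hctz'⟩
        have h1 : t0 = Classical.choose hex := by rw [ht0def, dif_pos hex]
        have h2 : x + t0 • v = z := by rw [h1]; exact Classical.choose_spec hex
        have h3 : t • v = t0 • v := by
          have := hctz'.trans h2.symm
          exact add_left_cancel this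
        exact htne (smul_left_injective ℝ hvne h3)
      have hmono := monotoneOn_glue hIo hIc
        (φ := fun s => L * g (x + s • v) - h (x + s • v))
        (ψ := fun s => L * ⟪g' (x + s • v), v⟫ - ⟪h' (x + s • v), v⟫)
        (fun t ht => hφd x v t ht) t0
        (by
          intro t ht htne
          refine ⟨L * ⟪g'' (x + t • v) v, v⟫ - ⟪h'' (x + t • v) v, v⟫, ?_, hψd x v t (hne t ht htne)⟩
          have := hess _ (hne t ht htne) v
          have e1 : ⟪v, h'' (x + t • v) v⟫ = ⟪h'' (x + t • v) v, v⟫ := real_inner_comm _ _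
          have e2 : ⟪v, g'' (x + t • v) v⟫ = ⟪g'' (x + t • v) v, v⟫ := real_inner_comm _ _
          rw [e1, e2] at this
          linarith)
      have hφconv : ConvexOn ℝ I (fun s => L * g (x + s • v) - h (x + s • v)) := by
        refine MonotoneOn.convexOn_of_deriv hIc ?_ ?_ ?_
        · exact fun t ht => (hφd x v t ht).continuousAt.continuousWithinAt
        · rw [hIo.interior_eq]
          exact fun t ht => (hφd x v t ht).differentiableAt.differentiableWithinAt
        · rw [hIo.interior_eq]
          intro s hs t ht hst
          rw [(hφd x v s hs).deriv, (hφd x v t ht).deriv]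
          exact hmono hs ht hst
      have h0I : (0 : ℝ) ∈ I := by
        show x + (0:ℝ) • v ∈ Q
        simpa using hx
      have h1I : (1 : ℝ) ∈ I := by
        show x + (1:ℝ) • v ∈ Q
        rw [one_smul, hv]
        simpa using hy
      have hcomb := hφconv.2 h0I h1I ha hb hab
      simp only [smul_eq_mul, mul_zero, mul_one, zero_add, zero_smul, add_zero, one_smul] at hcomb
      have heq : x + b • v = a • x + b • y := comb_aux2 x y hab
      rw [heq] at hcomb
      have hy' : x + v = y := by rw [hv]; abel
      rw [hy'] at hcomb
      exact hcomb
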